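/- Let G be a compact topological group and ρ : G → GL(n, ℝ) a continuous linear representation (a continuous group homomorphism into the group of invertible n×n real matrices) on ℝⁿ. If v₁, v₂ ∈ ℝⁿ lie in different G-orbits (there is no g ∈ G with ρ(g) v₁ = v₂), then there exists a G-invariant polynomial P in n variables over ℝ — i.e., P(ρ(g) v) = P(v) for all g ∈ G and v ∈ ℝⁿ — such that P(v₁) ≠ P(v₂). In other words, the algebra of real invariant polynomials of a compact group representation separates the orbits. -/

import Mathlib

open Matrix BigOperators MvPolynomial

noncomputable def polyComp {n : ℕ} (M : Matrix (Fin n) (Fin n) ℝ) :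
    MvPolynomial (Fin n) ℝ →ₐ[ℝ] MvPolynomial (Fin n) ℝ :=
  MvPolynomial.aeval fun i => ∑ j, MvPolynomial.C (M i j) * MvPolynomial.X j

lemma polyComp_X {n : ℕ} (M : Matrix (Fin n) (Fin n) ℝ) (i : Fin n) :
    polyComp M (MvPolynomial.X i) = ∑ j, MvPolynomial.C (M i j) * MvPolynomial.X j := by
  simp [polyComp]

lemma eval_polyComp {n : ℕ} (M : Matrix (Fin n) (Fin n) ℝ) (v : Fin n → ℝ)
    (p : MvPolynomial (Fin n) ℝ) :
    MvPolynomial.eval v (polyComp M p) = MvPolynomial.eval (M.mulVec v) p := by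
  induction p using MvPolynomial.induction_on with
  | C a => simp [polyComp]
  | add p q hp hq => simp only [map_add]; rw [hp, hq]
  | mul_X p i hp =>
    rw [_root_.map_mul (polyComp M), _root_.map_mul (MvPolynomial.eval v), hp, polyComp_X,
      _root_.map_mul (MvPolynomial.eval (M.mulVec v))]
    congr 1
    simp [Matrix.mulVec, dotProduct]

lemma continuous_eval_poly {n : ℕ} (p : MvPolynomial (Fin n) ℝ) :
    Continuous fun v : Fin n → ℝ => MvPolynomial.eval v p := by
  induction p using MvPolynomial.induction_on with
  | C a => simpa using continuous_const
  | add p q hp hq => simp only [map_add]; exact hp.add hq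
  | mul_X p i hp =>
    simp only [_root_.map_mul, MvPolynomial.eval_X]
    exact hp.mul (continuous_apply i)

lemma totalDegree_polyComp_le {n : ℕ} (M : Matrix (Fin n) (Fin n) ℝ)
    (p : MvPolynomial (Fin n) ℝ) :
    (polyComp M p).totalDegree ≤ p.totalDegree := by
  conv_lhs => rw [p.as_sum]
  rw [map_sum]
  refine (MvPolynomial.totalDegree_finset_sum _ _).trans (Finset.sup_le fun m hm => ?_)
  rw [polyComp, MvPolynomial.aeval_monomial]
  refine le_trans ?_ (MvPolynomial.le_totalDegree hm)
  refine (MvPolynomial.totalDegree_mul _ _).trans ?_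
  rw [MvPolynomial.algebraMap_eq, MvPolynomial.totalDegree_C, zero_add, Finsupp.prod,
    Finsupp.sum]
  refine (MvPolynomial.totalDegree_finset_prod _ _).trans ?_
  refine Finset.sum_le_sum fun i _ => ?_
  refine (MvPolynomial.totalDegree_pow _ _).trans ?_
  have h3 : (∑ j, MvPolynomial.C (M i j) * MvPolynomial.X j).totalDegree ≤ 1 := by
    refine (MvPolynomial.totalDegree_finset_sum _ _).trans (Finset.sup_le fun j _ => ?_)
    refine (MvPolynomial.totalDegree_mul _ _).trans ?_
    simp [MvPolynomial.totalDegree_C, MvPolynomial.totalDegree_X]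
  calc m i * (∑ j, MvPolynomial.C (M i j) * MvPolynomial.X j).totalDegree
      ≤ m i * 1 := Nat.mul_le_mul_left _ h3
    _ = m i := Nat.mul_one _

lemma continuous_coeff_polyComp {n : ℕ} (p : MvPolynomial (Fin n) ℝ) :
    ∀ m : Fin n →₀ ℕ,
      Continuous fun M : Matrix (Fin n) (Fin n) ℝ => MvPolynomial.coeff m (polyComp M p) := by
  classical
  induction p using MvPolynomial.induction_on with
  | C a =>
    intro m
    simpa [polyComp] using (continuous_const : Continuous fun _ : Matrix (Fin n) (Fin n) ℝ =>
      MvPolynomial.coeff m (MvPolynomial.C (R := ℝ) a))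
  | add p q hp hq =>
    intro m
    simp only [map_add, MvPolynomial.coeff_add]
    exact (hp m).add (hq m)
  | mul_X p i hp =>
    intro m
    have hrep : ∀ M : Matrix (Fin n) (Fin n) ℝ,
        MvPolynomial.coeff m (polyComp M (p * MvPolynomial.X i)) =
          ∑ j, (if j ∈ m.support then
            MvPolynomial.coeff (m - Finsupp.single j 1) (polyComp M p) * M i j else 0) := by
      intro M
      rw [_root_.map_mul (polyComp M), polyComp_X, Finset.mul_sum, MvPolynomial.coeff_sum]
      refine Finset.sum_congr rfl fun j _ => ?_
      rw [show polyComp M p * (MvPolynomial.C (M i j) * MvPolynomial.X j)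
          = MvPolynomial.C (M i j) * polyComp M p * MvPolynomial.X j by ring]
      rw [MvPolynomial.coeff_mul_X', MvPolynomial.coeff_C_mul]
      split_ifs with h
      · ring
      · rfl
    rw [show (fun M : Matrix (Fin n) (Fin n) ℝ =>
        MvPolynomial.coeff m (polyComp M (p * MvPolynomial.X i))) = _ from funext hrep]
    refine continuous_finset_sum _ fun j _ => ?_
    by_cases hj : j ∈ m.support
    · simp only [if_pos hj]
      exact (hp _).mul ((continuous_apply j).comp (continuous_apply i))
    · simp only [if_neg hj]
      exact continuous_const

open MeasureTheory

/-- for a continuous linear representation `ρ : G → GL(n, ℝ)` of a compact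
topological group `G` on `ℝⁿ`, the algebra of real `G`-invariant polynomials separates the
orbits: if `v₁` and `v₂` lie in different `G`-orbits, there is a `G`-invariant polynomial
taking different values at `v₁` and `v₂`. -/
theorem invariant_polynomials_separate_orbits
    {n : ℕ} {G : Type*} [Group G] [TopologicalSpace G] [IsTopologicalGroup G]
    [CompactSpace G]
    (ρ : G →* Matrix.GeneralLinearGroup (Fin n) ℝ)
    (hρ : Continuous fun g => (ρ g : Matrix (Fin n) (Fin n) ℝ))
    (v₁ v₂ : Fin n → ℝ)
    (horb : ¬ ∃ g : G, ((ρ g : Matrix (Fin n) (Fin n) ℝ)).mulVec v₁ = v₂) :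
    ∃ P : MvPolynomial (Fin n) ℝ,
      (∀ (g : G) (v : Fin n → ℝ),
        MvPolynomial.eval (((ρ g : Matrix (Fin n) (Fin n) ℝ)).mulVec v) P =
          MvPolynomial.eval v P) ∧
      MvPolynomial.eval v₁ P ≠ MvPolynomial.eval v₂ P := by
  classical
  -- continuity of orbit maps
  have hmv : ∀ v : Fin n → ℝ, Continuous fun M : Matrix (Fin n) (Fin n) ℝ => M.mulVec v := by
    intro v
    refine continuous_pi fun i => ?_
    simp only [Matrix.mulVec, dotProduct]
    exact continuous_finset_sum _ fun j _ =>
      ((continuous_apply_apply i j).mul continuous_const)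
  have horbcont : ∀ v : Fin n → ℝ,
      Continuous fun g : G => ((ρ g : Matrix (Fin n) (Fin n) ℝ)).mulVec v :=
    fun v => (hmv v).comp hρ
  set O₁ : Set (Fin n → ℝ) :=
    Set.range fun g : G => ((ρ g : Matrix (Fin n) (Fin n) ℝ)).mulVec v₁ with hO₁
  set O₂ : Set (Fin n → ℝ) :=
    Set.range fun g : G => ((ρ g : Matrix (Fin n) (Fin n) ℝ)).mulVec v₂ with hO₂
  have hO₁c : IsCompact O₁ := isCompact_range (horbcont v₁)
  have hO₂c : IsCompact O₂ := isCompact_range (horbcont v₂)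
  have hdisj : Disjoint O₁ O₂ := by
    rw [Set.disjoint_left]
    rintro x ⟨g, rfl⟩ ⟨g', hg'⟩
    refine horb ⟨g'⁻¹ * g, ?_⟩
    have h1 : (ρ (g'⁻¹ * g) : Matrix (Fin n) (Fin n) ℝ)
        = (ρ g'⁻¹ : Matrix (Fin n) (Fin n) ℝ) * (ρ g : Matrix (Fin n) (Fin n) ℝ) := by
      rw [_root_.map_mul]; rfl
    have hg'' : (ρ g' : Matrix (Fin n) (Fin n) ℝ).mulVec v₂
        = (ρ g : Matrix (Fin n) (Fin n) ℝ).mulVec v₁ := hg'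
    rw [h1, ← Matrix.mulVec_mulVec, ← hg'', Matrix.mulVec_mulVec]
    have h2 : (ρ g'⁻¹ : Matrix (Fin n) (Fin n) ℝ) * (ρ g' : Matrix (Fin n) (Fin n) ℝ)
        = (1 : Matrix (Fin n) (Fin n) ℝ) := by
      rw [show (ρ g'⁻¹ : Matrix (Fin n) (Fin n) ℝ) * (ρ g' : Matrix (Fin n) (Fin n) ℝ)
          = ((ρ g'⁻¹ * ρ g' : Matrix.GeneralLinearGroup (Fin n) ℝ) :
            Matrix (Fin n) (Fin n) ℝ) from rfl, ← _root_.map_mul, inv_mul_cancel, _root_.map_one]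
      rfl
    rw [h2, Matrix.one_mulVec]
  -- Urysohn
  obtain ⟨f, hf0, hf1, hf01⟩ :=
    exists_continuous_zero_one_of_isCompact hO₁c hO₂c.isClosed hdisj
  -- compact ball containing orbits
  obtain ⟨R, hR⟩ := (hO₁c.union hO₂c).isBounded.subset_closedBall (0 : Fin n → ℝ)
  set K : Set (Fin n → ℝ) := Metric.closedBall 0 R with hK
  have hKc : IsCompact K := isCompact_closedBall _ _
  haveI : CompactSpace K := isCompact_iff_compactSpace.mp hKc
  -- the subalgebra of polynomial functions on K
  set coords : Fin n → C(K, ℝ) :=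
    fun i => ⟨fun x => (x : Fin n → ℝ) i, (continuous_apply i).comp continuous_subtype_val⟩
    with hcoords
  set Φ : MvPolynomial (Fin n) ℝ →ₐ[ℝ] C(K, ℝ) := MvPolynomial.aeval coords with hΦdef
  have hΦ : ∀ (p : MvPolynomial (Fin n) ℝ) (x : K),
      Φ p x = MvPolynomial.eval (x : Fin n → ℝ) p := by
    intro p x
    induction p using MvPolynomial.induction_on with
    | C a => simp [hΦdef]
    | add p q hp hq => simp only [map_add, ContinuousMap.add_apply, hp, hq]
    | mul_X p i hp =>
      simp only [_root_.map_mul, ContinuousMap.mul_apply, hp, MvPolynomial.eval_X,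
        MvPolynomial.aeval_X, hΦdef, hcoords]
      exact congrArg (· * (x : Fin n → ℝ) i) hp
  have hsep : (Φ.range : Subalgebra ℝ C(K, ℝ)).SeparatesPoints := by
    intro x y hxy
    have hex : ∃ i, (x : Fin n → ℝ) i ≠ (y : Fin n → ℝ) i := by
      by_contra hc
      push_neg at hc
      exact hxy (Subtype.ext (funext hc))
    obtain ⟨i, hi⟩ := hex
    refine ⟨Φ (MvPolynomial.X i), ⟨Φ (MvPolynomial.X i), ⟨MvPolynomial.X i, rfl⟩, rfl⟩, ?_⟩
    simpa [hΦ] using hi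
  obtain ⟨gP, hgP⟩ := ContinuousMap.exists_mem_subalgebra_near_continuous_of_separatesPoints
    Φ.range hsep (fun x : K => f x) (f.continuous.comp continuous_subtype_val)
    (1/4) (by norm_num)
  obtain ⟨p₀, hp₀⟩ := gP.2
  -- bounds on the orbits
  have hb₁ : ∀ x ∈ O₁, MvPolynomial.eval x p₀ ≤ 1/4 := by
    intro x hx
    have hxK : x ∈ K := hR (Set.mem_union_left _ hx)
    have heq : (gP : C(K, ℝ)) ⟨x, hxK⟩ = MvPolynomial.eval x p₀ := by
      rw [← hp₀]; exact hΦ p₀ ⟨x, hxK⟩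
    have := hgP ⟨x, hxK⟩
    rw [heq] at this
    rw [show f ↑(⟨x, hxK⟩ : K) = 0 from hf0 hx] at this
    have habs : |MvPolynomial.eval x p₀ - 0| < 1/4 := by
      simpa [Real.norm_eq_abs] using this
    rw [sub_zero] at habs
    linarith [abs_lt.mp habs]
  have hb₂ : ∀ x ∈ O₂, 3/4 ≤ MvPolynomial.eval x p₀ := by
    intro x hx
    have hxK : x ∈ K := hR (Set.mem_union_right _ hx)
    have heq : (gP : C(K, ℝ)) ⟨x, hxK⟩ = MvPolynomial.eval x p₀ := by
      rw [← hp₀]; exact hΦ p₀ ⟨x, hxK⟩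
    have := hgP ⟨x, hxK⟩
    rw [heq] at this
    rw [show f ↑(⟨x, hxK⟩ : K) = 1 from hf1 hx] at this
    have habs : |MvPolynomial.eval x p₀ - 1| < 1/4 := by
      simpa [Real.norm_eq_abs] using this
    linarith [abs_lt.mp habs]
  -- Haar measure on G
  letI : MeasurableSpace G := borel G
  haveI : BorelSpace G := ⟨rfl⟩
  haveI : Nonempty G := ⟨1⟩
  set μ : MeasureTheory.Measure G :=
    MeasureTheory.Measure.haarMeasure (⊤ : TopologicalSpace.PositiveCompacts G) with hμ
  haveI : IsProbabilityMeasure μ := ⟨by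
    rw [← TopologicalSpace.PositiveCompacts.coe_top (α := G)]
    exact MeasureTheory.Measure.haarMeasure_self⟩
  have hint : ∀ F : G → ℝ, Continuous F → Integrable F μ := by
    intro F hF
    refine hF.integrable_of_hasCompactSupport ?_
    exact IsCompact.of_isClosed_subset isCompact_univ (isClosed_tsupport F) (Set.subset_univ _)
  have hcontinv : Continuous fun h : G => ((ρ h⁻¹ : Matrix (Fin n) (Fin n) ℝ)) :=
    hρ.comp continuous_inv
  -- the averaged polynomial
  set d := p₀.totalDegree with hd
  set T : Finset (Fin n →₀ ℕ) := Finset.Iic (Finsupp.equivFunOnFinite.symm fun _ : Fin n => d)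
    with hT
  have hsupp : ∀ M : Matrix (Fin n) (Fin n) ℝ, (polyComp M p₀).support ⊆ T := by
    intro M m hm
    rw [hT, Finset.mem_Iic, Finsupp.le_def]
    intro i
    have h1 : m i ≤ m.sum fun _ e => e := by
      rw [Finsupp.sum]
      by_cases hi : i ∈ m.support
      · exact Finset.single_le_sum (fun _ _ => Nat.zero_le _) hi
      · simp [Finsupp.notMem_support_iff.mp hi]
    have h2 := MvPolynomial.le_totalDegree hm
    have h3 := totalDegree_polyComp_le M p₀
    simpa using h1.trans (h2.trans h3)
  have hevalT : ∀ (M : Matrix (Fin n) (Fin n) ℝ) (v : Fin n → ℝ),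
      MvPolynomial.eval v (polyComp M p₀) =
        ∑ m ∈ T, MvPolynomial.coeff m (polyComp M p₀) * ∏ i, v i ^ m i := by
    intro M v
    rw [MvPolynomial.eval_eq' v (polyComp M p₀)]
    refine Finset.sum_subset (hsupp M) fun m _ hm => ?_
    rw [MvPolynomial.notMem_support_iff.mp hm, zero_mul]
  set Q : MvPolynomial (Fin n) ℝ := ∑ m ∈ T, MvPolynomial.monomial m
      (∫ h : G, MvPolynomial.coeff m (polyComp ((ρ h⁻¹ : Matrix (Fin n) (Fin n) ℝ)) p₀) ∂μ)
    with hQ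
  have key : ∀ v : Fin n → ℝ, MvPolynomial.eval v Q
      = ∫ h : G, MvPolynomial.eval (((ρ h⁻¹ : Matrix (Fin n) (Fin n) ℝ)).mulVec v) p₀ ∂μ := by
    intro v
    have hterm : ∀ m ∈ T, MvPolynomial.eval v (MvPolynomial.monomial m
        (∫ h : G, MvPolynomial.coeff m
          (polyComp ((ρ h⁻¹ : Matrix (Fin n) (Fin n) ℝ)) p₀) ∂μ))
        = ∫ h : G, MvPolynomial.coeff m
            (polyComp ((ρ h⁻¹ : Matrix (Fin n) (Fin n) ℝ)) p₀) * ∏ i, v i ^ m i ∂μ := by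
      intro m _
      rw [MvPolynomial.eval_monomial]
      rw [Finsupp.prod_fintype _ _ fun i => pow_zero (v i)]
      exact (MeasureTheory.integral_mul_const _ _).symm
    rw [hQ, map_sum, Finset.sum_congr rfl hterm]
    rw [← MeasureTheory.integral_finset_sum T fun m _ => ?_]
    · congr 1
      funext h
      rw [← hevalT, eval_polyComp]
    · exact hint _ (((continuous_coeff_polyComp p₀ m).comp hcontinv).mul continuous_const)
  -- invariance
  have hinvQ : ∀ (g : G) (v : Fin n → ℝ),
      MvPolynomial.eval (((ρ g : Matrix (Fin n) (Fin n) ℝ)).mulVec v) Q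
        = MvPolynomial.eval v Q := by
    intro g v
    rw [key, key]
    have hptw : ∀ h : G,
        MvPolynomial.eval (((ρ h⁻¹ : Matrix (Fin n) (Fin n) ℝ)).mulVec
          (((ρ g : Matrix (Fin n) (Fin n) ℝ)).mulVec v)) p₀
        = MvPolynomial.eval (((ρ (g⁻¹ * h)⁻¹ : Matrix (Fin n) (Fin n) ℝ)).mulVec v) p₀ := by
      intro h
      rw [Matrix.mulVec_mulVec]
      have hmm : (ρ h⁻¹ : Matrix (Fin n) (Fin n) ℝ) * (ρ g : Matrix (Fin n) (Fin n) ℝ)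
          = (ρ (g⁻¹ * h)⁻¹ : Matrix (Fin n) (Fin n) ℝ) := by
        rw [_root_.mul_inv_rev, inv_inv, _root_.map_mul]
        rfl
      rw [hmm]
    calc (∫ h : G, MvPolynomial.eval (((ρ h⁻¹ : Matrix (Fin n) (Fin n) ℝ)).mulVec
          (((ρ g : Matrix (Fin n) (Fin n) ℝ)).mulVec v)) p₀ ∂μ)
        = ∫ h : G, MvPolynomial.eval
            (((ρ (g⁻¹ * h)⁻¹ : Matrix (Fin n) (Fin n) ℝ)).mulVec v) p₀ ∂μ := by
          exact congrArg _ (funext hptw)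
      _ = ∫ h : G, MvPolynomial.eval
            (((ρ h⁻¹ : Matrix (Fin n) (Fin n) ℝ)).mulVec v) p₀ ∂μ :=
          MeasureTheory.integral_mul_left_eq_self
            (fun h : G => MvPolynomial.eval
              (((ρ h⁻¹ : Matrix (Fin n) (Fin n) ℝ)).mulVec v) p₀) g⁻¹
  -- continuity of the integrand
  have hintg : ∀ v : Fin n → ℝ, Continuous fun h : G =>
      MvPolynomial.eval (((ρ h⁻¹ : Matrix (Fin n) (Fin n) ℝ)).mulVec v) p₀ := by
    intro v
    exact (continuous_eval_poly p₀).comp ((hmv v).comp hcontinv)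
  -- value estimates
  have hQ₁ : MvPolynomial.eval v₁ Q ≤ 1/4 := by
    rw [key]
    have hbd : ∀ h : G, MvPolynomial.eval
        (((ρ h⁻¹ : Matrix (Fin n) (Fin n) ℝ)).mulVec v₁) p₀ ≤ 1/4 :=
      fun h => hb₁ _ ⟨h⁻¹, rfl⟩
    calc (∫ h : G, MvPolynomial.eval
          (((ρ h⁻¹ : Matrix (Fin n) (Fin n) ℝ)).mulVec v₁) p₀ ∂μ)
        ≤ ∫ _ : G, (1/4 : ℝ) ∂μ :=
          MeasureTheory.integral_mono (hint _ (hintg v₁))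
            (MeasureTheory.integrable_const _) hbd
      _ = 1/4 := by simp
  have hQ₂ : 3/4 ≤ MvPolynomial.eval v₂ Q := by
    rw [key]
    have hbd : ∀ h : G, 3/4 ≤ MvPolynomial.eval
        (((ρ h⁻¹ : Matrix (Fin n) (Fin n) ℝ)).mulVec v₂) p₀ :=
      fun h => hb₂ _ ⟨h⁻¹, rfl⟩
    calc (3/4 : ℝ) = ∫ _ : G, (3/4 : ℝ) ∂μ := by simp
      _ ≤ ∫ h : G, MvPolynomial.eval
          (((ρ h⁻¹ : Matrix (Fin n) (Fin n) ℝ)).mulVec v₂) p₀ ∂μ :=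
          MeasureTheory.integral_mono (MeasureTheory.integrable_const _)
            (hint _ (hintg v₂)) hbd
  have : MvPolynomial.eval v₁ Q ≠ MvPolynomial.eval v₂ Q := by
    intro hEq
    rw [hEq] at hQ₁
    linarith
  exact ⟨Q, hinvQ, this⟩
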